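/- Let H be a Hilbert space with orthonormal basis (w_j) of eigenvectors of a self-adjoint operator B with eigenvalues (μ_j), and let u be a unit eigenvector of a self-adjoint operator A with eigenvalue λ. Let Pr⊥ denote the orthogonal projection onto the closed span of {w_j : j ≠ i}. Then ‖Pr⊥(B u) − Pr⊥(A u)‖ ≥ (min_{j ≠ i} |μ_j − λ|) · ‖Pr⊥ u‖. -/

import Mathlib

open scoped InnerProductSpace

set_option maxHeartbeats 1000000 in
theorem stmt_17
    {H : Type*} [NormedAddCommGroup H] [InnerProductSpace ℝ H] [CompleteSpace H]
    (A B : H →L[ℝ] H) (hA : IsSelfAdjoint A) (hB : IsSelfAdjoint B)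
    (w : HilbertBasis ℕ ℝ H) (mu : ℕ → ℝ) (hw : ∀ j, B (w j) = mu j • w j)
    (u : H) (hu : ‖u‖ = 1) (lam : ℝ) (hAu : A u = lam • u)
    (i : ℕ) (δ : ℝ) (hδ : 0 ≤ δ) (hgap : ∀ j, j ≠ i → δ ≤ |mu j - lam|)
    (Pr : H → H)
    (hPr : Pr = fun v => ∑' j : {j : ℕ // j ≠ i}, ⟪v, w j⟫_ℝ • (w j : H)) :
    δ * ‖Pr u‖ ≤ ‖Pr (B u) - Pr (A u)‖ := by
  classical
  -- Pr v = v - ⟪v, w i⟫ • w i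
  have hPr' : ∀ v : H, Pr v = v - w.repr v i • w i := by
    intro v
    have h1 : HasSum (fun j : ℕ => w.repr v j • w j) v := w.hasSum_repr v
    have h2 : HasSum (fun j : {j : ℕ // j ∉ ({i} : Finset ℕ)} =>
        w.repr v (j : ℕ) • w (j : ℕ)) ((v - w.repr v i • w i)) :=
      (Finset.hasSum_compl_iff (f := fun j : ℕ => w.repr v j • w j)
        (a := v - w.repr v i • w i) ({i} : Finset ℕ)).2 (by simpa using h1)
    have h3 : HasSum (fun j : {j : ℕ // j ≠ i} =>
        ⟪v, w (j : ℕ)⟫_ℝ • (w (j : ℕ) : H)) (v - w.repr v i • w i) := by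
      have h3' := (Equiv.hasSum_iff
        (Equiv.subtypeEquivRight (p := fun j : ℕ => j ≠ i)
          (q := fun j : ℕ => j ∉ ({i} : Finset ℕ)) (fun j => by simp))).2 h2
      have hfe : (fun j : {j : ℕ // j ≠ i} => ⟪v, w (j : ℕ)⟫_ℝ • (w (j : ℕ) : H)) =
          (fun j : {j : ℕ // j ∉ ({i} : Finset ℕ)} => w.repr v (j : ℕ) • w (j : ℕ)) ∘
          (Equiv.subtypeEquivRight (p := fun j : ℕ => j ≠ i)
            (q := fun j : ℕ => j ∉ ({i} : Finset ℕ)) (fun j => by simp)) := by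
        funext j
        simp [Equiv.subtypeEquivRight, w.repr_apply_apply, real_inner_comm]
        rfl
      rw [hfe]
      exact h3'
    rw [hPr]
    exact h3.tsum_eq
  -- coordinates of Pr v
  have hcoord : ∀ v : H, ∀ j : ℕ,
      w.repr (Pr v) j = if j = i then 0 else w.repr v j := by
    intro v j
    rw [hPr' v]
    rw [map_sub, map_smul, w.repr_self]
    rw [lp.coeFn_sub, Pi.sub_apply, lp.coeFn_smul, Pi.smul_apply, lp.single_apply]
    by_cases h : j = i <;> simp [h]
  -- coordinates of B u and A u
  have hBc : ∀ j : ℕ, w.repr (B u) j = mu j * w.repr u j := by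
    intro j
    have hs := hB.isSymmetric (w j) u
    simp only [ContinuousLinearMap.coe_coe] at hs
    rw [w.repr_apply_apply, w.repr_apply_apply, ← hs, hw j, real_inner_smul_left]
  have hAc : ∀ j : ℕ, w.repr (A u) j = lam * w.repr u j := by
    intro j
    rw [hAu, map_smul]
    simp
  set x := w.repr (Pr (B u) - Pr (A u)) with hx
  set y := w.repr (Pr u) with hy
  have hxj : ∀ j : ℕ, x j = if j = i then 0 else (mu j - lam) * w.repr u j := by
    intro j
    rw [hx, map_sub, lp.coeFn_sub, Pi.sub_apply, hcoord, hcoord, hBc, hAc]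
    by_cases h : j = i <;> simp [h] <;> ring
  have hyj : ∀ j : ℕ, y j = if j = i then 0 else w.repr u j := hcoord u
  -- norms via inner products in ℓ²
  have hnx : ‖Pr (B u) - Pr (A u)‖ ^ 2 = ∑' j : ℕ, (x j) ^ 2 := by
    rw [← real_inner_self_eq_norm_sq, ← w.repr.inner_map_map, ← hx, lp.inner_eq_tsum]
    congr 1; ext j; simp [sq, RCLike.inner_apply]
  have hny : ‖Pr u‖ ^ 2 = ∑' j : ℕ, (y j) ^ 2 := by
    rw [← real_inner_self_eq_norm_sq, ← w.repr.inner_map_map, ← hy, lp.inner_eq_tsum]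
    congr 1; ext j; simp [sq, RCLike.inner_apply]
  have hsumx : Summable (fun j : ℕ => (x j) ^ 2) := by
    have := lp.summable_inner (𝕜 := ℝ) x x
    simpa [sq, RCLike.inner_apply] using this
  have hpt : ∀ j : ℕ, δ ^ 2 * (y j) ^ 2 ≤ (x j) ^ 2 := by
    intro j
    by_cases h : j = i
    · subst h; simp [hxj j, hyj j]
    · rw [hxj j, hyj j, if_neg h, if_neg h, mul_pow]
      have h1 : δ ^ 2 ≤ (mu j - lam) ^ 2 := by
        rw [← sq_abs (mu j - lam)]
        exact pow_le_pow_left₀ hδ (hgap j h) 2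
      exact mul_le_mul_of_nonneg_right h1 (sq_nonneg _)
  have hsq : (δ * ‖Pr u‖) ^ 2 ≤ ‖Pr (B u) - Pr (A u)‖ ^ 2 := by
    rw [mul_pow, hnx, hny, ← tsum_mul_left]
    refine Summable.tsum_le_tsum hpt ?_ hsumx
    exact (hsumx.of_nonneg_of_le (fun j => by positivity) hpt)
  have h1 : 0 ≤ δ * ‖Pr u‖ := mul_nonneg hδ (norm_nonneg _)
  nlinarith [norm_nonneg (Pr (B u) - Pr (A u))]
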